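/- arXiv:0811.1696 — 3 statements merged into one kernel-verified Lean document; each statement's English description precedes it below -/
import Mathlib

section
/- For all s, t ≥ 0, the conditional expectation under Q satisfies E_Q[1/Z_{t+s} | F_t] = (1/Z_t) · P(Z_{t+s} > 0 | F_t), Q-almost surely; here P(Z_{t+s} > 0 | F_t) denotes the conditional probability under P of the event {Z_{t+s} > 0} given F_t. -/
open MeasureTheory Filter
open scoped NNReal ENNReal

lemma lintegral_density_aux
    {Ω : Type*} {m : MeasurableSpace Ω}
    (ℱ : Filtration ℝ≥0 m) (P Q : Measure Ω)
    (Z : ℝ≥0 → Ω → ℝ) (hadapted : Adapted ℱ Z)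
    (hdensity : ∀ t, ∀ A, MeasurableSet[ℱ t] A →
      Q A = ∫⁻ ω in A, ENNReal.ofReal (Z t ω) ∂P)
    (u : ℝ≥0) {f : Ω → ℝ≥0∞} (hf : Measurable[ℱ u] f) :
    ∫⁻ ω, f ω ∂Q = ∫⁻ ω, f ω * ENNReal.ofReal (Z u ω) ∂P := by
  have hZm : Measurable[ℱ u] (fun ω => ENNReal.ofReal (Z u ω)) :=
    ENNReal.measurable_ofReal.comp (hadapted u)
  have hQtrim : Q.trim (ℱ.le u) =
      (P.trim (ℱ.le u)).withDensity (fun ω => ENNReal.ofReal (Z u ω)) := by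
    refine @Measure.ext Ω (ℱ u) _ _ (fun A hA => ?_)
    rw [trim_measurableSet_eq (ℱ.le u) hA, hdensity u A hA,
      withDensity_apply _ hA]
    rw [← lintegral_indicator hA, ← lintegral_indicator ((ℱ.le u) _ hA)]
    exact (lintegral_trim (ℱ.le u) (hZm.indicator hA)).symm
  calc ∫⁻ ω, f ω ∂Q = ∫⁻ ω, f ω ∂(Q.trim (ℱ.le u)) := (lintegral_trim _ hf).symm
    _ = ∫⁻ ω, f ω ∂((P.trim (ℱ.le u)).withDensity (fun ω => ENNReal.ofReal (Z u ω))) := by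
        rw [hQtrim]
    _ = ∫⁻ ω, ((fun ω => ENNReal.ofReal (Z u ω)) * f) ω ∂(P.trim (ℱ.le u)) :=
        lintegral_withDensity_eq_lintegral_mul _ hZm hf
    _ = ∫⁻ ω, ENNReal.ofReal (Z u ω) * f ω ∂P := lintegral_trim (ℱ.le u) (hZm.mul hf)
    _ = ∫⁻ ω, f ω * ENNReal.ofReal (Z u ω) ∂P := by simp [mul_comm]

lemma setLintegral_density_aux
    {Ω : Type*} {m : MeasurableSpace Ω}
    (ℱ : Filtration ℝ≥0 m) (P Q : Measure Ω)
    (Z : ℝ≥0 → Ω → ℝ) (hadapted : Adapted ℱ Z)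
    (hdensity : ∀ t, ∀ A, MeasurableSet[ℱ t] A →
      Q A = ∫⁻ ω in A, ENNReal.ofReal (Z t ω) ∂P)
    (u : ℝ≥0) {f : Ω → ℝ≥0∞} (hf : Measurable[ℱ u] f)
    {A : Set Ω} (hA : MeasurableSet[ℱ u] A) :
    ∫⁻ ω in A, f ω ∂Q = ∫⁻ ω in A, f ω * ENNReal.ofReal (Z u ω) ∂P := by
  have hAm : MeasurableSet A := (ℱ.le u) _ hA
  rw [← lintegral_indicator hAm, ← lintegral_indicator hAm]
  have h1 : ∫⁻ ω, A.indicator f ω ∂Q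
      = ∫⁻ ω, A.indicator f ω * ENNReal.ofReal (Z u ω) ∂P :=
    lintegral_density_aux ℱ P Q Z hadapted hdensity u (hf.indicator hA)
  rw [h1]
  congr 1
  funext ω
  by_cases hω : ω ∈ A
  · simp [Set.indicator_of_mem hω]
  · simp [Set.indicator_of_notMem hω]

/-- For all `s, t ≥ 0`, `Q`-a.s.,
`E_Q[1/Z_{t+s} | ℱ_t] = (1/Z_t) · P(Z_{t+s} > 0 | ℱ_t)`, where `1/0 := 0`. -/
theorem condexp_inv_density
    {Ω : Type*} {m : MeasurableSpace Ω}
    (ℱ : Filtration ℝ≥0 m)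
    (P Q : Measure Ω) [IsProbabilityMeasure P] [IsProbabilityMeasure Q]
    (Z : ℝ≥0 → Ω → ℝ)
    (hadapted : Adapted ℱ Z)
    (hnonneg : ∀ t ω, 0 ≤ Z t ω)
    (hrc : ∀ ω t, ContinuousWithinAt (fun s => Z s ω) (Set.Ici t) t)
    (hdensity : ∀ t, ∀ A, MeasurableSet[ℱ t] A →
      Q A = ∫⁻ ω in A, ENNReal.ofReal (Z t ω) ∂P) :
    ∀ t s : ℝ≥0, ∀ᵐ ω ∂Q,
      (Q[fun ω' => (Z (t + s) ω')⁻¹ | ℱ t]) ω =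
        (Z t ω)⁻¹ *
          (P[Set.indicator {ω' | 0 < Z (t + s) ω'} (fun _ => (1 : ℝ)) | ℱ t]) ω := by
  intro t s
  set T : Set Ω := {ω' | 0 < Z (t + s) ω'} with hT
  set g : Ω → ℝ := P[Set.indicator T (fun _ => (1 : ℝ)) | ℱ t] with hg
  set h : Ω → ℝ := fun ω => (Z t ω)⁻¹ * g ω with hh
  set f : Ω → ℝ := fun ω' => (Z (t + s) ω')⁻¹ with hf
  set S : Set Ω := {ω | 0 < Z t ω} with hS
  have hle : ℱ t ≤ m := ℱ.le t
  have hle' : ℱ (t + s) ≤ m := ℱ.le (t + s)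
  have hmono : ℱ t ≤ ℱ (t + s) := ℱ.mono le_self_add
  haveI : SigmaFinite (Q.trim hle) := by
    haveI : IsFiniteMeasure (Q.trim hle) := isFiniteMeasure_trim hle
    infer_instance
  -- measurability facts
  have hZt : Measurable[ℱ t] (Z t) := (hadapted t)
  have hZts : Measurable[ℱ (t + s)] (Z (t + s)) := (hadapted (t + s))
  have hTmeas : MeasurableSet[ℱ (t + s)] T := measurableSet_lt measurable_const hZts
  have hTm : MeasurableSet T := hle' _ hTmeas
  have hSmeas : MeasurableSet[ℱ t] S := measurableSet_lt measurable_const hZt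
  have hSm : MeasurableSet S := hle _ hSmeas
  have hgsm : StronglyMeasurable[ℱ t] g := stronglyMeasurable_condExp
  have hfm : Measurable[ℱ (t + s)] f := hZts.inv
  have hhm : Measurable[ℱ t] h := (hZt.inv).mul hgsm.measurable
  have hind_int : Integrable (Set.indicator T (fun _ => (1 : ℝ))) P :=
    (integrable_const (1 : ℝ)).indicator hTm
  have hg_int : Integrable g P := integrable_condExp
  have hg_nonneg : 0 ≤ᵐ[P] g :=
    condExp_nonneg (Eventually.of_forall fun ω =>
      Set.indicator_nonneg (fun _ _ => zero_le_one) ω)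
  have hQnull : ∀ N : Set Ω, MeasurableSet[ℱ t] N → P N = 0 → Q N = 0 := by
    intro N hN hPN
    rw [hdensity t N hN, setLIntegral_measure_zero _ _ hPN]
  have hg_nonneg_Q : 0 ≤ᵐ[Q] g := by
    have hNm : MeasurableSet[ℱ t] {ω | ¬ 0 ≤ g ω} := by
      have : {ω | ¬ 0 ≤ g ω} = {ω | g ω < 0} := by ext ω; simp [not_le]
      rw [this]
      exact measurableSet_lt hgsm.measurable measurable_const
    exact hQnull _ hNm hg_nonneg
  have hh_nonneg_Q : 0 ≤ᵐ[Q] h := by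
    filter_upwards [hg_nonneg_Q] with ω hω
    exact mul_nonneg (inv_nonneg.2 (hnonneg t ω)) hω
  have hf_nonneg : ∀ ω, 0 ≤ f ω := fun ω => inv_nonneg.2 (hnonneg _ ω)
  -- complement of S is {Z t = 0}
  have hScompl : Sᶜ = {ω | Z t ω = 0} := by
    ext ω
    simp only [hS, Set.mem_compl_iff, Set.mem_setOf_eq, not_lt]
    exact ⟨fun hz => le_antisymm hz (hnonneg t ω), fun hz => le_of_eq hz⟩
  -- key null set
  have hkey : P (Sᶜ ∩ T) = 0 := by
    have hScm : MeasurableSet[ℱ (t + s)] (Sᶜ ∩ T) := (hmono _ hSmeas.compl).inter hTmeas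
    have hQSc : Q Sᶜ = 0 := by
      rw [hdensity t _ hSmeas.compl]
      have : ∀ ω ∈ Sᶜ, ENNReal.ofReal (Z t ω) = 0 := by
        intro ω hω
        rw [hScompl] at hω
        exact ENNReal.ofReal_eq_zero.mpr (le_of_eq hω)
      rw [setLIntegral_congr_fun (hle _ hSmeas.compl) (show Set.EqOn (fun ω => ENNReal.ofReal (Z t ω)) (fun _ => 0) Sᶜ from fun ω hω => this ω hω)]
      simp
    have hQ0 : Q (Sᶜ ∩ T) = 0 :=
      le_antisymm (le_trans (measure_mono Set.inter_subset_left) hQSc.le) zero_le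
    have h0 : ∫⁻ ω in Sᶜ ∩ T, ENNReal.ofReal (Z (t + s) ω) ∂P = 0 := by
      rw [← hdensity (t + s) _ hScm]; exact hQ0
    have hmeasm : Measurable (fun ω => ENNReal.ofReal (Z (t + s) ω)) :=
      ENNReal.measurable_ofReal.comp (hZts.mono hle' le_rfl)
    have hae := (lintegral_eq_zero_iff hmeasm).mp h0
    have hmem := ae_restrict_mem (μ := P) (((hle _ hSmeas.compl).inter hTm))
    have : ∀ᵐ ω ∂P.restrict (Sᶜ ∩ T), False := by
      filter_upwards [hae, hmem] with ω h1 h2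
      have : 0 < Z (t + s) ω := h2.2
      have := ENNReal.ofReal_eq_zero.mp h1
      linarith
    have := ae_iff.mp this
    simpa using this
  -- pointwise identity 1
  have key1 : ∀ ω, ENNReal.ofReal (f ω) * ENNReal.ofReal (Z (t + s) ω)
      = T.indicator (fun _ => (1 : ℝ≥0∞)) ω := by
    intro ω
    by_cases hz : 0 < Z (t + s) ω
    · rw [Set.indicator_of_mem (show ω ∈ T from hz), ← ENNReal.ofReal_mul (hf_nonneg ω)]
      simp [hf, inv_mul_cancel₀ hz.ne']
    · have hz0 : Z (t + s) ω = 0 :=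
        le_antisymm (not_lt.mp hz) (hnonneg _ ω)
      rw [Set.indicator_of_notMem (show ω ∉ T from hz)]
      simp [hz0]
  -- pointwise identity 2
  have key2 : ∀ ω, ENNReal.ofReal (h ω) * ENNReal.ofReal (Z t ω)
      = S.indicator (fun ω => ENNReal.ofReal (g ω)) ω := by
    intro ω
    by_cases hz : 0 < Z t ω
    · rw [Set.indicator_of_mem (show ω ∈ S from hz)]
      rw [hh]
      rw [ENNReal.ofReal_mul (inv_nonneg.2 (hnonneg t ω))]
      rw [mul_right_comm, ← ENNReal.ofReal_mul (inv_nonneg.2 (hnonneg t ω))]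
      simp [inv_mul_cancel₀ hz.ne']
    · have hz0 : Z t ω = 0 := le_antisymm (not_lt.mp hz) (hnonneg _ ω)
      rw [Set.indicator_of_notMem (show ω ∉ S from hz)]
      simp [hh, hz0]
  -- integrability of f under Q
  have hf_aesm : AEStronglyMeasurable f Q :=
    ((hfm.mono hle' le_rfl)).aestronglyMeasurable
  have hf_int : Integrable f Q := by
    refine ⟨hf_aesm, ?_⟩
    rw [hasFiniteIntegral_iff_ofReal (Eventually.of_forall hf_nonneg)]
    have hofm : Measurable[ℱ (t + s)] (fun ω => ENNReal.ofReal (f ω)) :=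
      ENNReal.measurable_ofReal.comp hfm
    rw [lintegral_density_aux ℱ P Q Z hadapted hdensity (t + s) hofm]
    calc ∫⁻ ω, ENNReal.ofReal (f ω) * ENNReal.ofReal (Z (t + s) ω) ∂P
        = ∫⁻ ω, T.indicator (fun _ => (1 : ℝ≥0∞)) ω ∂P := by
          exact lintegral_congr fun ω => key1 ω
      _ = P T := lintegral_indicator_one hTm
      _ < ∞ := measure_lt_top _ _
  -- integrability of h under Q
  have hofg_lt : ∫⁻ ω, ENNReal.ofReal (g ω) ∂P < ∞ := by
    rw [← ofReal_integral_eq_lintegral_ofReal hg_int hg_nonneg]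
    exact ENNReal.ofReal_lt_top
  have hofh : Measurable[ℱ t] (fun ω => ENNReal.ofReal (h ω)) :=
    ENNReal.measurable_ofReal.comp hhm
  have hh_int : Integrable h Q := by
    refine ⟨(hhm.mono hle le_rfl).aestronglyMeasurable, ?_⟩
    rw [hasFiniteIntegral_iff_ofReal hh_nonneg_Q]
    rw [lintegral_density_aux ℱ P Q Z hadapted hdensity t hofh]
    calc ∫⁻ ω, ENNReal.ofReal (h ω) * ENNReal.ofReal (Z t ω) ∂P
        = ∫⁻ ω, S.indicator (fun ω => ENNReal.ofReal (g ω)) ω ∂P :=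
          lintegral_congr fun ω => key2 ω
      _ ≤ ∫⁻ ω, ENNReal.ofReal (g ω) ∂P :=
          lintegral_mono fun ω => Set.indicator_le_self _ _ ω
      _ < ∞ := hofg_lt
  -- set integral equality
  have hset_eq : ∀ A : Set Ω, MeasurableSet[ℱ t] A → Q A < ∞ →
      ∫ x in A, h x ∂Q = ∫ x in A, f x ∂Q := by
    intro A hA _
    have hAm : MeasurableSet A := hle _ hA
    have hA' : MeasurableSet[ℱ (t + s)] A := hmono _ hA
    -- RHS
    have hRHS : ∫ x in A, f x ∂Q = (P (T ∩ A)).toReal := by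
      rw [integral_eq_lintegral_of_nonneg_ae
        (Eventually.of_forall hf_nonneg : 0 ≤ᵐ[Q.restrict A] f)
        hf_aesm.restrict]
      have hoff : Measurable[ℱ (t + s)] (fun ω => ENNReal.ofReal (f ω)) :=
        ENNReal.measurable_ofReal.comp hfm
      rw [setLintegral_density_aux ℱ P Q Z hadapted hdensity (t + s) hoff hA']
      congr 1
      calc ∫⁻ ω in A, ENNReal.ofReal (f ω) * ENNReal.ofReal (Z (t + s) ω) ∂P
          = ∫⁻ ω in A, T.indicator (fun _ => (1 : ℝ≥0∞)) ω ∂P :=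
            lintegral_congr fun ω => key1 ω
        _ = P (T ∩ A) := by
            rw [lintegral_indicator hTm, Measure.restrict_restrict hTm]
            simp
    -- null part
    have hnullpart : ∫⁻ ω in Sᶜ ∩ A, ENNReal.ofReal (g ω) ∂P = 0 := by
      have hBm : MeasurableSet[ℱ t] (Sᶜ ∩ A) := hSmeas.compl.inter hA
      have hB : MeasurableSet (Sᶜ ∩ A) := hle _ hBm
      have hint_g : ∫ ω in Sᶜ ∩ A, g ω ∂P = (P (T ∩ (Sᶜ ∩ A))).toReal := by
        rw [hg, setIntegral_condExp hle hind_int hBm]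
        rw [integral_indicator_const (1 : ℝ) hTm]
        rw [measureReal_restrict_apply hTm]
        simp [measureReal_def]
      have hPz : P (T ∩ (Sᶜ ∩ A)) = 0 := by
        refine le_antisymm (le_trans (measure_mono ?_) hkey.le) zero_le
        intro ω hω
        exact ⟨hω.2.1, hω.1⟩
      rw [hPz] at hint_g
      simp only [ENNReal.toReal_zero] at hint_g
      rw [← ofReal_integral_eq_lintegral_ofReal hg_int.integrableOn
        (ae_restrict_of_ae hg_nonneg), hint_g]
      simp
    -- LHS
    have hLHS : ∫ x in A, h x ∂Q = (P (T ∩ A)).toReal := by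
      rw [integral_eq_lintegral_of_nonneg_ae (ae_restrict_of_ae hh_nonneg_Q)
        (hhm.mono hle le_rfl).aestronglyMeasurable.restrict]
      rw [setLintegral_density_aux ℱ P Q Z hadapted hdensity t hofh hA]
      have step1 : ∫⁻ ω in A, ENNReal.ofReal (h ω) * ENNReal.ofReal (Z t ω) ∂P
          = ∫⁻ ω in S ∩ A, ENNReal.ofReal (g ω) ∂P := by
        calc ∫⁻ ω in A, ENNReal.ofReal (h ω) * ENNReal.ofReal (Z t ω) ∂P
            = ∫⁻ ω in A, S.indicator (fun ω => ENNReal.ofReal (g ω)) ω ∂P :=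
              lintegral_congr fun ω => key2 ω
          _ = ∫⁻ ω in S ∩ A, ENNReal.ofReal (g ω) ∂P := by
              rw [lintegral_indicator hSm, Measure.restrict_restrict hSm]
      have step2 : ∫⁻ ω in S ∩ A, ENNReal.ofReal (g ω) ∂P
          = ∫⁻ ω in A, ENNReal.ofReal (g ω) ∂P := by
        have hsplit := lintegral_add_compl (fun ω => ENNReal.ofReal (g ω))
          hSm (μ := P.restrict A)
        rw [Measure.restrict_restrict hSm, Measure.restrict_restrict hSm.compl]
          at hsplit
        rw [← hsplit, hnullpart, add_zero]
      have step3 : ∫⁻ ω in A, ENNReal.ofReal (g ω) ∂P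
          = ENNReal.ofReal (∫ ω in A, g ω ∂P) :=
        (ofReal_integral_eq_lintegral_ofReal hg_int.integrableOn
          (ae_restrict_of_ae hg_nonneg)).symm
      have step4 : ∫ ω in A, g ω ∂P = (P (T ∩ A)).toReal := by
        rw [hg, setIntegral_condExp hle hind_int hA]
        rw [integral_indicator_const (1 : ℝ) hTm, measureReal_restrict_apply hTm]
        simp [measureReal_def]
      rw [step1, step2, step3, step4]
      rw [ENNReal.toReal_ofReal ENNReal.toReal_nonneg]
    rw [hLHS, hRHS]
  -- conclude
  have hgm' : AEStronglyMeasurable[ℱ t] h Q :=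
    ⟨h, hhm.stronglyMeasurable, EventuallyEq.rfl⟩
  have heq : h =ᵐ[Q] Q[f|ℱ t] :=
    ae_eq_condExp_of_forall_setIntegral_eq hle hf_int
      (fun A hA _ => hh_int.integrableOn) hset_eq hgm'
  filter_upwards [heq] with ω hω
  exact hω.symm
end

section
/- Under Q the limit superior of the density process is almost surely positive: Q(Z_∞ = 0) = 0, where Z_∞ := limsup_{t→∞} Z_t is taken as a [0,∞]-valued random variable. -/
open MeasureTheory Filter
open scoped NNReal ENNReal

/-- Under `Q` the limsup of the density process is a.s. positive:
`Q(Z_∞ = 0) = 0`, where `Z_∞ := limsup_{t→∞} Z_t` as a `[0,∞]`-valued random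
variable, and `F` is generated by `⋃ t, ℱ t`. -/
theorem limsup_density_pos_under_Q
    {Ω : Type*} {m : MeasurableSpace Ω}
    (ℱ : Filtration ℝ≥0 m)
    (hgen : (⨆ t, (ℱ t : MeasurableSpace Ω)) = m)
    (P Q : Measure Ω) [IsProbabilityMeasure P] [IsProbabilityMeasure Q]
    (Z : ℝ≥0 → Ω → ℝ)
    (hadapted : Adapted ℱ Z)
    (hnonneg : ∀ t ω, 0 ≤ Z t ω)
    (hrc : ∀ ω t, ContinuousWithinAt (fun s => Z s ω) (Set.Ici t) t)
    (hdensity : ∀ t, ∀ A, MeasurableSet[ℱ t] A →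
      Q A = ∫⁻ ω in A, ENNReal.ofReal (Z t ω) ∂P)
    (Zinf : Ω → ℝ≥0∞)
    (hZinf : ∀ ω, Zinf ω = Filter.limsup (fun t => ENNReal.ofReal (Z t ω)) Filter.atTop) :
    Q {ω | Zinf ω = 0} = 0 := by
  -- Main estimate: for every ε > 0, Q {Zinf = 0} ≤ ofReal ε.
  have key : ∀ ε : ℝ, 0 < ε → Q {ω | Zinf ω = 0} ≤ ENNReal.ofReal ε := by
    intro ε hε
    set A : ℕ → Set Ω := fun k => {ω | Z (k : ℝ≥0) ω < ε} with hA
    set B : ℕ → Set Ω := fun N => ⋂ k, ⋂ (_ : N ≤ k), A k with hB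
    have hBmono : Monotone B := by
      intro N M hNM
      exact Set.iInter₂_mono' fun k hk => ⟨k, le_trans hNM hk, le_rfl⟩
    -- inclusion into ⋃ N, B N
    have hsub : {ω | Zinf ω = 0} ⊆ ⋃ N, B N := by
      intro ω hω
      have h0 : Filter.limsup (fun t => ENNReal.ofReal (Z t ω)) Filter.atTop = 0 := by
        rw [← hZinf ω]; exact hω
      have hlt : ∀ᶠ t in (atTop : Filter ℝ≥0), ENNReal.ofReal (Z t ω) < ENNReal.ofReal ε := by
        refine eventually_lt_of_limsup_lt ?_
        rw [h0]; exact ENNReal.ofReal_pos.mpr hε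
      obtain ⟨T, hT⟩ := eventually_atTop.mp hlt
      obtain ⟨N, hN⟩ := exists_nat_ge T
      refine Set.mem_iUnion.mpr ⟨N, ?_⟩
      refine Set.mem_iInter₂.mpr fun k hk => ?_
      have hTk : T ≤ (k : ℝ≥0) := le_trans hN (by exact_mod_cast hk)
      have := hT _ hTk
      exact (ENNReal.ofReal_lt_ofReal_iff hε).mp this
    -- each A N has small Q-measure
    have hQA : ∀ N : ℕ, Q (A N) ≤ ENNReal.ofReal ε := by
      intro N
      have hm : MeasurableSet[ℱ (N : ℝ≥0)] (A N) :=
        measurableSet_lt (hadapted (N : ℝ≥0)) measurable_const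
      rw [hdensity _ _ hm]
      calc ∫⁻ ω in A N, ENNReal.ofReal (Z (N : ℝ≥0) ω) ∂P
          ≤ ∫⁻ _ in A N, ENNReal.ofReal ε ∂P :=
            setLIntegral_mono measurable_const
              (fun ω hω => ENNReal.ofReal_le_ofReal (le_of_lt hω))
        _ = ENNReal.ofReal ε * P (A N) := setLIntegral_const _ _
        _ ≤ ENNReal.ofReal ε * 1 := mul_le_mul_right prob_le_one _
        _ = ENNReal.ofReal ε := mul_one _
    calc Q {ω | Zinf ω = 0} ≤ Q (⋃ N, B N) := measure_mono hsub
      _ = ⨆ N, Q (B N) := (hBmono.directed_le).measure_iUnion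
      _ ≤ ENNReal.ofReal ε := by
          refine iSup_le fun N => le_trans (measure_mono ?_) (hQA N)
          exact Set.iInter₂_subset N le_rfl
  refine le_antisymm ?_ zero_le
  refine ENNReal.le_of_forall_pos_le_add fun ε hε _ => ?_
  have := key ε (by exact_mod_cast hε)
  simpa [ENNReal.ofReal_coe_nnreal] using this
end

section
/- If the family {1/Z_t : t ≥ 0} is uniformly integrable with respect to Q, then P(Z_∞ > 0) = P(Υ = ∞), where Z_∞ := limsup_{t→∞} Z_t and Υ := inf{s ≥ 0 : Z_s = 0} is the extinction time (with inf ∅ := ∞). -/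
open MeasureTheory Filter
open scoped NNReal ENNReal Topology

namespace UIExtAux

variable {Ω : Type*} {m : MeasurableSpace Ω} {ℱ : Filtration ℝ≥0 m}
  {P Q : Measure Ω} {Z : ℝ≥0 → Ω → ℝ}

theorem transfer (hadapted : Adapted ℱ Z)
    (hdensity : ∀ t, ∀ A, MeasurableSet[ℱ t] A →
      Q A = ∫⁻ ω in A, ENNReal.ofReal (Z t ω) ∂P)
    (t : ℝ≥0) {f : Ω → ℝ≥0∞} (hf : Measurable[ℱ t] f) :
    ∫⁻ ω, f ω ∂Q = ∫⁻ ω, f ω * ENNReal.ofReal (Z t ω) ∂P := by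
  have hZm : Measurable[ℱ t] (fun ω => ENNReal.ofReal (Z t ω)) :=
    ENNReal.measurable_ofReal.comp (hadapted t)
  have hle := ℱ.le t
  have htrim : Q.trim hle
      = (P.trim hle).withDensity (fun ω => ENNReal.ofReal (Z t ω)) := by
    refine @Measure.ext _ (ℱ t) _ _ (fun A hA => ?_)
    rw [trim_measurableSet_eq hle hA, withDensity_apply _ hA,
      restrict_trim hle P hA, lintegral_trim _ hZm, hdensity t A hA]
  calc ∫⁻ ω, f ω ∂Q = ∫⁻ ω, f ω ∂(Q.trim hle) := (lintegral_trim hle hf).symm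
    _ = ∫⁻ ω, ((fun ω => ENNReal.ofReal (Z t ω)) * f) ω ∂(P.trim hle) := by
        rw [htrim, lintegral_withDensity_eq_lintegral_mul _ hZm hf]
    _ = ∫⁻ ω, ((fun ω => ENNReal.ofReal (Z t ω)) * f) ω ∂P :=
        lintegral_trim hle (hZm.mul hf)
    _ = ∫⁻ ω, f ω * ENNReal.ofReal (Z t ω) ∂P := by
        simp only [Pi.mul_apply, mul_comm]

theorem meas_le (hdensity : ∀ t, ∀ A, MeasurableSet[ℱ t] A →
      Q A = ∫⁻ ω in A, ENNReal.ofReal (Z t ω) ∂P)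
    (t : ℝ≥0) {A : Set Ω} (hA : MeasurableSet[ℱ t] A) {ε : ℝ}
    (h : ∀ ω ∈ A, Z t ω ≤ ε) : Q A ≤ ENNReal.ofReal ε * P A := by
  rw [hdensity t A hA]
  calc ∫⁻ ω in A, ENNReal.ofReal (Z t ω) ∂P
      ≤ ∫⁻ _ω in A, ENNReal.ofReal ε ∂P :=
        setLIntegral_mono' (ℱ.le t _ hA) fun ω hω => ENNReal.ofReal_le_ofReal (h ω hω)
    _ = ENNReal.ofReal ε * P A := setLIntegral_const _ _

theorem meas_ge (hdensity : ∀ t, ∀ A, MeasurableSet[ℱ t] A →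
      Q A = ∫⁻ ω in A, ENNReal.ofReal (Z t ω) ∂P)
    (t : ℝ≥0) {A : Set Ω} (hA : MeasurableSet[ℱ t] A) {δ : ℝ}
    (h : ∀ ω ∈ A, δ ≤ Z t ω) : ENNReal.ofReal δ * P A ≤ Q A := by
  rw [hdensity t A hA]
  calc ENNReal.ofReal δ * P A = ∫⁻ _ω in A, ENNReal.ofReal δ ∂P := (setLIntegral_const _ _).symm
    _ ≤ ∫⁻ ω in A, ENNReal.ofReal (Z t ω) ∂P :=
        setLIntegral_mono' (ℱ.le t _ hA) fun ω hω => ENNReal.ofReal_le_ofReal (h ω hω)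

noncomputable def dy (n k : ℕ) : ℝ≥0 := (k : ℝ≥0) / 2 ^ n

theorem dy_strictMono (n : ℕ) : StrictMono (dy n) := by
  intro k k' h
  unfold dy
  rw [div_lt_div_iff_of_pos_right (by positivity)]
  exact_mod_cast h

theorem dy_succ (n k : ℕ) : dy (n + 1) (2 * k) = dy n k := by
  unfold dy
  push_cast
  rw [pow_succ]
  rw [mul_comm ((2:ℝ≥0)^n) 2, ← div_div]
  congr 1
  rw [mul_comm, mul_div_assoc, div_self (by norm_num : (2:ℝ≥0) ≠ 0), mul_one]

theorem dy_exists {x h : ℝ≥0} (hh : 0 < h) : ∃ n k, x ≤ dy n k ∧ dy n k < x + h := by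
  obtain ⟨n, hn⟩ := NNReal.exists_pow_lt_of_lt_one (b := (1/2 : ℝ≥0)) hh (by rw [← NNReal.coe_lt_coe]; norm_num)
  refine ⟨n, ⌈(x : ℝ) * 2 ^ n⌉₊, ?_, ?_⟩
  · unfold dy
    rw [le_div_iff₀ (by positivity)]
    have := Nat.le_ceil ((x : ℝ) * 2 ^ n)
    rw [← NNReal.coe_le_coe]
    push_cast
    exact this
  · unfold dy
    rw [div_lt_iff₀ (by positivity)]
    have h1 : ((⌈(x : ℝ) * 2 ^ n⌉₊ : ℝ)) < (x : ℝ) * 2 ^ n + 1 :=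
      Nat.ceil_lt_add_one (by positivity)
    have h2 : (1 : ℝ) < (h : ℝ) * 2 ^ n := by
      have : ((1:ℝ≥0)/2) ^ n < h := hn
      rw [← NNReal.coe_lt_coe] at this
      push_cast at this
      rw [div_pow, one_pow, div_lt_iff₀ (by positivity)] at this
      linarith
    rw [← NNReal.coe_lt_coe]
    push_cast
    nlinarith [NNReal.coe_nonneg x]

theorem dy_common {n1 k1 n2 k2 : ℕ} (hlt : dy n1 k1 < dy n2 k2) :
    ∃ n i j, i < j ∧ dy n i = dy n1 k1 ∧ dy n j = dy n2 k2 := by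
  refine ⟨n1 + n2, k1 * 2 ^ n2, k2 * 2 ^ n1, ?_, ?_, ?_⟩
  · unfold dy at hlt
    rw [div_lt_div_iff₀ (by positivity) (by positivity)] at hlt
    · rw [← @Nat.cast_lt ℝ≥0]
      push_cast
      calc (k1 : ℝ≥0) * 2 ^ n2 < (k2 : ℝ≥0) * 2 ^ n1 := by
            rw [← NNReal.coe_lt_coe] at hlt ⊢; push_cast at hlt ⊢; linarith
        _ = _ := by ring
  · unfold dy
    push_cast
    rw [pow_add]
    exact mul_div_mul_right _ _ (by positivity)
  · unfold dy
    push_cast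
    rw [pow_add, mul_comm ((2:ℝ≥0) ^ n1) (2 ^ n2)]
    exact mul_div_mul_right _ _ (by positivity)

variable {Ω : Type*} {m : MeasurableSpace Ω} {ℱ : Filtration ℝ≥0 m}
  {P Q : Measure Ω} {Z : ℝ≥0 → Ω → ℝ}

theorem star [IsProbabilityMeasure P] [IsProbabilityMeasure Q] (hadapted : Adapted ℱ Z)
    (hnonneg : ∀ t ω, 0 ≤ Z t ω)
    (hdensity : ∀ t, ∀ A, MeasurableSet[ℱ t] A →
      Q A = ∫⁻ ω in A, ENNReal.ofReal (Z t ω) ∂P)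
    (hUI : UniformIntegrable (fun (t : ℝ≥0) ω => (Z t ω)⁻¹) 1 Q)
    {η : ℝ} (hη : 0 < η) :
    ∃ ε : ℝ, 0 < ε ∧ ∀ t, P {ω | 0 < Z t ω ∧ Z t ω ≤ ε} ≤ ENNReal.ofReal η := by
  obtain ⟨δ, hδ, hbound⟩ := hUI.2.1 hη
  refine ⟨δ, hδ, fun t => ?_⟩
  set s := {ω | 0 < Z t ω ∧ Z t ω ≤ δ} with hs_def
  have hsF : MeasurableSet[ℱ t] s := by
    have : s = Z t ⁻¹' Set.Ioc 0 δ := rfl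
    rw [this]
    exact (hadapted t) measurableSet_Ioc
  have hs : MeasurableSet s := ℱ.le t _ hsF
  have hPs1 : P s ≤ 1 := prob_le_one
  have hQs : Q s ≤ ENNReal.ofReal δ := by
    calc Q s ≤ ENNReal.ofReal δ * P s := meas_le hdensity t hsF (fun ω hω => hω.2)
      _ ≤ ENNReal.ofReal δ * 1 := mul_le_mul_right hPs1 _
      _ = ENNReal.ofReal δ := mul_one _
  have hsnorm := hbound t s hs hQs
  have hfF : Measurable[ℱ t] (s.indicator fun ω => ENNReal.ofReal ((Z t ω)⁻¹)) :=
    (ENNReal.measurable_ofReal.comp (hadapted t).inv).indicator hsF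
  have h2 := transfer hadapted hdensity t hfF
  -- RHS of h2 is P s
  have hR : ∫⁻ ω, (s.indicator fun ω => ENNReal.ofReal ((Z t ω)⁻¹)) ω
      * ENNReal.ofReal (Z t ω) ∂P = P s := by
    have hpt : ∀ ω, (s.indicator fun ω => ENNReal.ofReal ((Z t ω)⁻¹)) ω
        * ENNReal.ofReal (Z t ω) = s.indicator (fun _ => (1 : ℝ≥0∞)) ω := by
      intro ω
      by_cases hω : ω ∈ s
      · rw [Set.indicator_of_mem hω, Set.indicator_of_mem hω,
          ← ENNReal.ofReal_mul (inv_nonneg.2 (hnonneg t ω)),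
          inv_mul_cancel₀ (ne_of_gt hω.1), ENNReal.ofReal_one]
      · rw [Set.indicator_of_notMem hω, Set.indicator_of_notMem hω, zero_mul]
    rw [lintegral_congr hpt]
    exact lintegral_indicator_one hs
  -- LHS of h2 is the eLpNorm
  have hL : ∫⁻ ω, (s.indicator fun ω => ENNReal.ofReal ((Z t ω)⁻¹)) ω ∂Q
      = eLpNorm (s.indicator fun ω => (Z t ω)⁻¹) 1 Q := by
    rw [eLpNorm_one_eq_lintegral_enorm]
    refine lintegral_congr fun ω => ?_
    by_cases hω : ω ∈ s
    · rw [Set.indicator_of_mem hω, Set.indicator_of_mem hω,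
        Real.enorm_eq_ofReal (inv_nonneg.2 (hnonneg t ω))]
    · rw [Set.indicator_of_notMem hω, Set.indicator_of_notMem hω]
      simp
  calc P s = ∫⁻ ω, (s.indicator fun ω => ENNReal.ofReal ((Z t ω)⁻¹)) ω ∂Q := by rw [h2, hR]
    _ = eLpNorm (s.indicator fun ω => (Z t ω)⁻¹) 1 Q := hL
    _ ≤ ENNReal.ofReal η := hsnorm

theorem grid_bound [IsProbabilityMeasure P] [IsProbabilityMeasure Q]
    (hadapted : Adapted ℱ Z)
    (hdensity : ∀ t, ∀ A, MeasurableSet[ℱ t] A →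
      Q A = ∫⁻ ω in A, ENNReal.ofReal (Z t ω) ∂P)
    {t : ℕ → ℝ≥0} (ht : StrictMono t) {ε δ : ℝ} (hδ : 0 < δ) :
    P {ω | ∃ i j, i < j ∧ Z (t i) ω ≤ ε ∧ δ < Z (t j) ω}
      ≤ ENNReal.ofReal ε / ENNReal.ofReal δ := by
  classical
  set d := ENNReal.ofReal δ with hd_def
  have hd0 : d ≠ 0 := (ENNReal.ofReal_pos.2 hδ).ne'
  have hdtop : d ≠ ∞ := ENNReal.ofReal_ne_top
  -- measurability of Z at earlier times w.r.t. later σ-algebras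
  have hZF : ∀ (r u : ℝ≥0), r ≤ u → Measurable[ℱ u] (Z r) := fun r u h =>
    (hadapted r).mono (ℱ.mono h) le_rfl
  set B : ℕ → Set Ω := fun i =>
    {ω | (∀ l, l < i → ε < Z (t l) ω) ∧ Z (t i) ω ≤ ε} with hB_def
  set C : ℕ → ℕ → Set Ω := fun i j =>
    {ω | ω ∈ B i ∧ i < j ∧ (∀ l, i < l → l < j → Z (t l) ω ≤ δ) ∧ δ < Z (t j) ω} with hC_def
  have hBF : ∀ i, MeasurableSet[ℱ (t i)] (B i) := by
    intro i
    have : B i = (⋂ l, ⋂ (_ : l < i), Z (t l) ⁻¹' Set.Ioi ε) ∩ Z (t i) ⁻¹' Set.Iic ε := by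
      ext ω; simp [hB_def, Set.mem_iInter]
    rw [this]
    exact MeasurableSet.inter
      (MeasurableSet.iInter fun l => MeasurableSet.iInter fun hl =>
        (hZF (t l) (t i) (ht.monotone hl.le)) measurableSet_Ioi)
      ((hZF (t i) (t i) le_rfl) measurableSet_Iic)
  have hCF : ∀ i j, i < j → MeasurableSet[ℱ (t j)] (C i j) := by
    intro i j hij
    have : C i j = (B i ∩ (⋂ l, ⋂ (_ : i < l), ⋂ (_ : l < j), Z (t l) ⁻¹' Set.Iic δ))
        ∩ Z (t j) ⁻¹' Set.Ioi δ := by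
      ext ω
      simp only [hC_def, Set.mem_setOf_eq, Set.mem_inter_iff, Set.mem_iInter,
        Set.mem_preimage, Set.mem_Iic, Set.mem_Ioi]
      constructor
      · rintro ⟨h1, h2, h3, h4⟩; exact ⟨⟨h1, h3⟩, h4⟩
      · rintro ⟨⟨h1, h3⟩, h4⟩; exact ⟨h1, hij, h3, h4⟩
    rw [this]
    refine MeasurableSet.inter (MeasurableSet.inter ?_ ?_) ?_
    · exact (ℱ.mono (ht.monotone hij.le)) _ (hBF i)
    · exact MeasurableSet.iInter fun l => MeasurableSet.iInter fun _ =>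
        MeasurableSet.iInter fun hl =>
        (hZF (t l) (t j) (ht.monotone hl.le)) measurableSet_Iic
    · exact (hZF (t j) (t j) le_rfl) measurableSet_Ioi
  have hBm : ∀ i, MeasurableSet (B i) := fun i => ℱ.le (t i) _ (hBF i)
  have hCm : ∀ i j, MeasurableSet (C i j) := by
    intro i j
    rcases lt_or_ge i j with hij | hij
    · exact ℱ.le (t j) _ (hCF i j hij)
    · have : C i j = ∅ := Set.eq_empty_of_forall_notMem fun ω hω =>
        absurd hω.2.1 (not_lt.2 hij)
      rw [this]; exact MeasurableSet.empty
  -- disjointness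
  have hBkey : ∀ {i i' : ℕ}, i < i' → ∀ ω, ω ∈ B i → ω ∉ B i' := by
    intro i i' h ω h1 h2
    exact absurd h1.2 (not_le.2 (h2.1 i h))
  have hBdisj : Pairwise (Function.onFun Disjoint B) := by
    intro i i' hne
    rcases hne.lt_or_gt with h | h
    · exact Set.disjoint_left.2 fun ω h1 h2 => hBkey h ω h1 h2
    · exact Set.disjoint_right.2 fun ω h1 h2 => hBkey h ω h1 h2
  have hCdisj : ∀ i, Pairwise (Function.onFun Disjoint (C i)) := by
    intro i j j' hne
    have key : ∀ {a b : ℕ}, a < b → ∀ ω, ω ∈ C i a → ω ∉ C i b := by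
      intro a b h ω h1 h2
      exact absurd h1.2.2.2 (not_lt.2 (h2.2.2.1 a h1.2.1 h))
    rcases hne.lt_or_gt with h | h
    · exact Set.disjoint_left.2 fun ω h1 h2 => key h ω h1 h2
    · exact Set.disjoint_right.2 fun ω h1 h2 => key h ω h1 h2
  -- coverage
  have hcover : {ω | ∃ i j, i < j ∧ Z (t i) ω ≤ ε ∧ δ < Z (t j) ω} ⊆ ⋃ i, ⋃ j, C i j := by
    rintro ω ⟨a, b, hab, ha, hb⟩
    have hP1 : ∃ i, Z (t i) ω ≤ ε := ⟨a, ha⟩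
    set i0 := Nat.find hP1 with hi0_def
    have hi0le : i0 ≤ a := Nat.find_min' hP1 ha
    have hP2 : ∃ j, i0 < j ∧ δ < Z (t j) ω := ⟨b, lt_of_le_of_lt hi0le hab, hb⟩
    set j0 := Nat.find hP2 with hj0_def
    refine Set.mem_iUnion.2 ⟨i0, Set.mem_iUnion.2 ⟨j0, ?_⟩⟩
    refine ⟨⟨fun l hl => not_le.1 (Nat.find_min hP1 hl), Nat.find_spec hP1⟩,
      (Nat.find_spec hP2).1, fun l hl1 hl2 => ?_, (Nat.find_spec hP2).2⟩
    by_contra hcon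
    exact absurd (Nat.find_min' hP2 ⟨hl1, not_le.1 hcon⟩) (not_le.2 hl2)
  -- the measure computation
  have hCB : ∀ i, (⋃ j, C i j) ⊆ B i := fun i =>
    Set.iUnion_subset fun j ω hω => hω.1
  have hstep : ∀ i, P (⋃ j, C i j) ≤ ENNReal.ofReal ε * P (B i) / d := by
    intro i
    have h1 : ∀ j, P (C i j) ≤ Q (C i j) / d := by
      intro j
      rcases lt_or_ge i j with hij | hij
      · rw [ENNReal.le_div_iff_mul_le (Or.inl hd0) (Or.inl hdtop), mul_comm]
        exact meas_ge hdensity (t j) (hCF i j hij) (fun ω hω => hω.2.2.2.le)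
      · have : C i j = ∅ := Set.eq_empty_of_forall_notMem fun ω hω =>
          absurd hω.2.1 (not_lt.2 hij)
        rw [this]; simp
    calc P (⋃ j, C i j) ≤ ∑' j, P (C i j) := measure_iUnion_le _
      _ ≤ ∑' j, Q (C i j) / d := ENNReal.tsum_le_tsum h1
      _ = (∑' j, Q (C i j)) / d := by
          simp only [div_eq_mul_inv, ENNReal.tsum_mul_right]
      _ = Q (⋃ j, C i j) / d := by rw [measure_iUnion (hCdisj i) (hCm i)]
      _ ≤ Q (B i) / d := by
          gcongr
          exact hCB i
      _ ≤ ENNReal.ofReal ε * P (B i) / d := by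
          gcongr
          exact meas_le hdensity (t i) (hBF i) (fun ω hω => hω.2)
  calc P {ω | ∃ i j, i < j ∧ Z (t i) ω ≤ ε ∧ δ < Z (t j) ω}
      ≤ P (⋃ i, ⋃ j, C i j) := measure_mono hcover
    _ ≤ ∑' i, P (⋃ j, C i j) := measure_iUnion_le _
    _ ≤ ∑' i, ENNReal.ofReal ε * P (B i) / d := ENNReal.tsum_le_tsum hstep
    _ = ENNReal.ofReal ε * (∑' i, P (B i)) / d := by
        simp only [div_eq_mul_inv, ENNReal.tsum_mul_right, ENNReal.tsum_mul_left]
    _ ≤ ENNReal.ofReal ε * 1 / d := by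
        gcongr
        rw [← measure_iUnion hBdisj hBm]
        exact prob_le_one
    _ = ENNReal.ofReal ε / d := by rw [mul_one]

end UIExtAux

/-- If the family `{1/Z_t : t ≥ 0}` is uniformly integrable with
respect to `Q`, then `P(Z_∞ > 0) = P(Υ = ∞)`, where `Z_∞ := limsup_{t→∞} Z_t`
and `Υ := inf {s ≥ 0 : Z_s = 0}` (with `inf ∅ := ∞`). -/
theorem ui_implies_extinction_identity
    {Ω : Type*} {m : MeasurableSpace Ω}
    (ℱ : Filtration ℝ≥0 m)
    (hgen : (⨆ t, (ℱ t : MeasurableSpace Ω)) = m)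
    (P Q : Measure Ω) [IsProbabilityMeasure P] [IsProbabilityMeasure Q]
    (Z : ℝ≥0 → Ω → ℝ)
    (hadapted : Adapted ℱ Z)
    (hnonneg : ∀ t ω, 0 ≤ Z t ω)
    (hrc : ∀ ω t, ContinuousWithinAt (fun s => Z s ω) (Set.Ici t) t)
    (hdensity : ∀ t, ∀ A, MeasurableSet[ℱ t] A →
      Q A = ∫⁻ ω in A, ENNReal.ofReal (Z t ω) ∂P)
    (Zinf : Ω → ℝ≥0∞)
    (hZinf : ∀ ω, Zinf ω = Filter.limsup (fun t => ENNReal.ofReal (Z t ω)) Filter.atTop)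
    (Υ : Ω → ℝ≥0∞)
    (hΥ : ∀ ω, Υ ω = sInf {s : ℝ≥0∞ | ∃ r : ℝ≥0, (r : ℝ≥0∞) = s ∧ Z r ω = 0})
    (hUI : UniformIntegrable (fun (t : ℝ≥0) ω => (Z t ω)⁻¹) 1 Q) :
    P {ω | 0 < Zinf ω} = P {ω | Υ ω = ∞} := by
  classical
  set A := {ω | 0 < Zinf ω} with hA_def
  set B := {ω | Υ ω = ∞} with hB_def
  -- ========== Part 1 : P (A \ B) = 0 ==========
  have hE1 : P (A \ B) = 0 := by
    set D : ℝ → ℝ → Set Ω := fun ε δ =>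
      ⋃ n, {ω | ∃ i j, i < j ∧ Z (UIExtAux.dy n i) ω ≤ ε ∧ δ < Z (UIExtAux.dy n j) ω} with hD_def
    have hDbound : ∀ ε δ : ℝ, 0 < δ →
        P (D ε δ) ≤ ENNReal.ofReal ε / ENNReal.ofReal δ := by
      intro ε δ hδ
      have hmono : Monotone (fun n =>
          {ω | ∃ i j, i < j ∧ Z (UIExtAux.dy n i) ω ≤ ε ∧ δ < Z (UIExtAux.dy n j) ω}) := by
        refine monotone_nat_of_le_succ fun n ω hω => ?_
        obtain ⟨i, j, hij, h1, h2⟩ := hω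
        exact ⟨2 * i, 2 * j, by omega, by rwa [UIExtAux.dy_succ], by rwa [UIExtAux.dy_succ]⟩
      rw [hD_def]
      rw [Directed.measure_iUnion hmono.directed_le]
      exact iSup_le fun n => UIExtAux.grid_bound hadapted hdensity (UIExtAux.dy_strictMono n) hδ
    have hcov : A \ B ⊆
        ⋃ mm : ℕ, ⋂ k : ℕ, D (((k : ℝ) + 1)⁻¹) (((mm : ℝ) + 1)⁻¹) := by
      rintro ω ⟨hpos, hne⟩
      simp only [hA_def, Set.mem_setOf_eq] at hpos
      simp only [hB_def, Set.mem_setOf_eq] at hne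
      set S := {s : ℝ≥0∞ | ∃ r : ℝ≥0, (r : ℝ≥0∞) = s ∧ Z r ω = 0} with hS_def
      have hΥS : Υ ω = sInf S := hΥ ω
      set υ : ℝ≥0 := (Υ ω).toNNReal with hυ_def
      have hυcoe : (υ : ℝ≥0∞) = Υ ω := ENNReal.coe_toNNReal hne
      -- a sequence of zeros of Z converging to υ from the right
      have hseq : ∀ n : ℕ, ∃ r : ℝ≥0, Z r ω = 0 ∧ υ ≤ r ∧ r < υ + ((n : ℝ≥0) + 1)⁻¹ := by
        intro n
        set c : ℝ≥0 := ((n : ℝ≥0) + 1)⁻¹ with hc_def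
        have hcpos : 0 < c := by positivity
        have hlt : sInf S < sInf S + (c : ℝ≥0∞) := by
          rw [← hΥS]
          exact ENNReal.lt_add_right hne (ENNReal.coe_ne_zero.2 hcpos.ne')
        obtain ⟨s, hsS, hslt⟩ := sInf_lt_iff.mp hlt
        obtain ⟨r, rfl, hr0⟩ := hsS
        refine ⟨r, hr0, ?_, ?_⟩
        · have h1 : sInf S ≤ (r : ℝ≥0∞) := sInf_le ⟨r, rfl, hr0⟩
          rw [← hΥS, ← hυcoe, ENNReal.coe_le_coe] at h1
          exact h1
        · rw [← hΥS, ← hυcoe, ← ENNReal.coe_add, ENNReal.coe_lt_coe] at hslt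
          exact hslt
      choose r hr0 hrge hrlt using hseq
      have hczero : Tendsto (fun n : ℕ => ((n : ℝ≥0) + 1)⁻¹) atTop (𝓝 0) := by
        refine NNReal.tendsto_coe.1 ?_
        push_cast
        simpa [one_div] using tendsto_one_div_add_atTop_nhds_zero_nat (𝕜 := ℝ)
      have hrt : Tendsto r atTop (𝓝 υ) := by
        refine tendsto_of_tendsto_of_tendsto_of_le_of_le tendsto_const_nhds ?_ hrge
          (fun n => (hrlt n).le)
        simpa using tendsto_const_nhds.add hczero
      have hZυ : Z υ ω = 0 := by
        have h1 : Tendsto (fun n => Z (r n) ω) atTop (𝓝 (Z υ ω)) :=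
          (hrc ω υ).tendsto.comp
            (tendsto_nhdsWithin_iff.2 ⟨hrt, Eventually.of_forall hrge⟩)
        have h2 : Tendsto (fun n => Z (r n) ω) atTop (𝓝 0) := by
          simp only [hr0]; exact tendsto_const_nhds
        exact tendsto_nhds_unique h1 h2
      -- choose the level δm
      have hL : (0 : ℝ≥0∞) < limsup (fun t => ENNReal.ofReal (Z t ω)) atTop := by
        rw [← hZinf ω]; exact hpos
      have hmm : ∃ mm : ℕ, ENNReal.ofReal (((mm : ℝ) + 1)⁻¹)
          < limsup (fun t => ENNReal.ofReal (Z t ω)) atTop := by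
        obtain ⟨nn, hnn⟩ := ENNReal.exists_inv_nat_lt hL.ne'
        refine ⟨nn, lt_of_le_of_lt ?_ hnn⟩
        have heq : ENNReal.ofReal (((nn : ℝ) + 1)⁻¹) = ((nn + 1 : ℕ) : ℝ≥0∞)⁻¹ := by
          rw [ENNReal.ofReal_inv_of_pos (by positivity)]
          congr 1
          rw [← ENNReal.ofReal_natCast (nn + 1)]
          congr 1
          push_cast; ring
        rw [heq]
        exact ENNReal.inv_le_inv.2 (by exact_mod_cast Nat.le_succ nn)
      obtain ⟨mm, hmm⟩ := hmm
      set δm : ℝ := ((mm : ℝ) + 1)⁻¹ with hδm_def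
      have hδmpos : 0 < δm := by positivity
      have hfreq : ∀ T : ℝ≥0, ∃ u, T ≤ u ∧ δm < Z u ω := by
        have h2 : ∃ᶠ u in atTop, ENNReal.ofReal δm < ENNReal.ofReal (Z u ω) :=
          frequently_lt_of_lt_limsup (by isBoundedDefault) hmm
        intro T
        obtain ⟨u, hu, hlt⟩ := frequently_atTop.1 h2 T
        refine ⟨u, hu, ?_⟩
        by_contra hcon
        exact absurd hlt (not_lt.2 (ENNReal.ofReal_le_ofReal (not_lt.1 hcon)))
      refine Set.mem_iUnion.2 ⟨mm, Set.mem_iInter.2 fun k => ?_⟩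
      set εk : ℝ := ((k : ℝ) + 1)⁻¹ with hεk_def
      have hεk : 0 < εk := by positivity
      -- dyadic point q just after υ where Z is small
      have hev1 : ∀ᶠ x in 𝓝[Set.Ici υ] υ, Z x ω ∈ Set.Iio εk :=
        (hrc ω υ).tendsto.eventually (Iio_mem_nhds (by rw [hZυ]; exact hεk))
      obtain ⟨h1, h1pos, hball⟩ := Metric.mem_nhdsWithin_iff.1 hev1
      obtain ⟨n1, k1, hq1, hq2⟩ := UIExtAux.dy_exists (x := υ) (h := h1.toNNReal)
        (Real.toNNReal_pos.2 h1pos)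
      set q := UIExtAux.dy n1 k1 with hq_def
      have hqlt : Z q ω < εk := by
        refine hball ⟨?_, hq1⟩
        rw [Metric.mem_ball, NNReal.dist_eq]
        have hcoe : (q : ℝ) < (υ : ℝ) + h1 := by
          have := hq2
          rw [← NNReal.coe_lt_coe] at this
          push_cast at this
          rwa [Real.coe_toNNReal _ h1pos.le] at this
        have hge : (υ : ℝ) ≤ q := NNReal.coe_le_coe.2 hq1
        rw [abs_of_nonneg (by linarith)]
        linarith
      -- dyadic point rr after q where Z is large
      obtain ⟨u, huq, hu⟩ := hfreq (q + 1)
      have hev2 : ∀ᶠ x in 𝓝[Set.Ici u] u, Z x ω ∈ Set.Ioi δm :=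
        (hrc ω u).tendsto.eventually (Ioi_mem_nhds hu)
      obtain ⟨h2, h2pos, hball2⟩ := Metric.mem_nhdsWithin_iff.1 hev2
      obtain ⟨n2, k2, hr1, hr2⟩ := UIExtAux.dy_exists (x := u) (h := h2.toNNReal)
        (Real.toNNReal_pos.2 h2pos)
      set rr := UIExtAux.dy n2 k2 with hrr_def
      have hrlt2 : δm < Z rr ω := by
        refine hball2 ⟨?_, hr1⟩
        rw [Metric.mem_ball, NNReal.dist_eq]
        have hcoe : (rr : ℝ) < (u : ℝ) + h2 := by
          have := hr2
          rw [← NNReal.coe_lt_coe] at this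
          push_cast at this
          rwa [Real.coe_toNNReal _ h2pos.le] at this
        have hge : (u : ℝ) ≤ rr := NNReal.coe_le_coe.2 hr1
        rw [abs_of_nonneg (by linarith)]
        linarith
      have hqr : q < rr :=
        lt_of_lt_of_le (lt_add_of_pos_right q one_pos) (le_trans huq hr1)
      obtain ⟨n, i, j, hij, hqi, hqj⟩ := UIExtAux.dy_common hqr
      refine Set.mem_iUnion.2 ⟨n, ⟨i, j, hij, ?_, ?_⟩⟩
      · rw [hqi, ← hq_def]; exact hqlt.le
      · rw [hqj, ← hrr_def]; exact hrlt2
    have hzero : ∀ mm : ℕ,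
        P (⋂ k : ℕ, D (((k : ℝ) + 1)⁻¹) (((mm : ℝ) + 1)⁻¹)) = 0 := by
      intro mm
      set c := ENNReal.ofReal (((mm : ℝ) + 1)⁻¹) with hc
      have hcne : c ≠ 0 := (ENNReal.ofReal_pos.2 (by positivity)).ne'
      have hub : ∀ k : ℕ, P (⋂ k' : ℕ, D (((k' : ℝ) + 1)⁻¹) (((mm : ℝ) + 1)⁻¹))
          ≤ ENNReal.ofReal (((k : ℝ) + 1)⁻¹) / c := fun k =>
        le_trans (measure_mono (Set.iInter_subset _ k)) (hDbound _ _ (by positivity))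
      have htend : Tendsto (fun k : ℕ => ENNReal.ofReal (((k : ℝ) + 1)⁻¹) / c)
          atTop (𝓝 0) := by
        have h1 : Tendsto (fun k : ℕ => ENNReal.ofReal (((k : ℝ) + 1)⁻¹)) atTop (𝓝 0) := by
          rw [← ENNReal.ofReal_zero]
          apply ENNReal.tendsto_ofReal
          simpa [one_div] using tendsto_one_div_add_atTop_nhds_zero_nat (𝕜 := ℝ)
        simpa using ENNReal.Tendsto.div_const h1 (Or.inr hcne)
      exact le_antisymm (ge_of_tendsto' htend hub) zero_le
    refine le_antisymm ?_ zero_le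
    calc P (A \ B) ≤ P (⋃ mm : ℕ, ⋂ k : ℕ, D (((k : ℝ) + 1)⁻¹) (((mm : ℝ) + 1)⁻¹)) :=
          measure_mono hcov
      _ ≤ ∑' mm : ℕ, P (⋂ k : ℕ, D (((k : ℝ) + 1)⁻¹) (((mm : ℝ) + 1)⁻¹)) :=
          measure_iUnion_le _
      _ = 0 := by simp [hzero]
  -- ========== Part 2 : P (B \ A) = 0 ==========
  have hE2 : P (B \ A) = 0 := by
    refine le_antisymm ?_ zero_le
    refine ENNReal.le_of_forall_pos_le_add fun η hη _ => ?_
    rw [zero_add]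
    obtain ⟨ε, hε, hstar⟩ := UIExtAux.star hadapted hnonneg hdensity hUI
      (show (0 : ℝ) < (η : ℝ) from hη)
    have hcov : B \ A ⊆ ⋃ N : ℕ, ⋂ n : ℕ, ⋂ (_ : N ≤ n),
        {ω | 0 < Z (n : ℝ≥0) ω ∧ Z (n : ℝ≥0) ω ≤ ε} := by
      rintro ω ⟨hΥω, hnpos⟩
      simp only [hB_def, Set.mem_setOf_eq] at hΥω
      simp only [hA_def, Set.mem_setOf_eq] at hnpos
      have hpos : ∀ rr : ℝ≥0, 0 < Z rr ω := by
        intro rr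
        rcases (hnonneg rr ω).lt_or_eq with h | h
        · exact h
        · exfalso
          have hmem : (rr : ℝ≥0∞) ∈ {s : ℝ≥0∞ | ∃ r : ℝ≥0, (r : ℝ≥0∞) = s ∧ Z r ω = 0} :=
            ⟨rr, rfl, h.symm⟩
          have := sInf_le hmem
          rw [← hΥ ω, hΥω] at this
          exact absurd (lt_of_le_of_lt this ENNReal.coe_lt_top) (lt_irrefl _)
      have hlim : Zinf ω = 0 := by
        by_contra h
        exact hnpos (pos_iff_ne_zero.2 h)
      have hev : ∀ᶠ u in atTop, ENNReal.ofReal (Z u ω) < ENNReal.ofReal ε :=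
        eventually_lt_of_limsup_lt
          (by rw [← hZinf ω, hlim]; exact ENNReal.ofReal_pos.2 hε)
      obtain ⟨T, hT⟩ := eventually_atTop.1 hev
      obtain ⟨N, hN⟩ := exists_nat_ge T
      refine Set.mem_iUnion.2 ⟨N, Set.mem_iInter.2 fun n => Set.mem_iInter.2 fun hn => ?_⟩
      have hTn : T ≤ (n : ℝ≥0) := le_trans hN (by exact_mod_cast hn)
      have hlt := hT _ hTn
      refine ⟨hpos _, ?_⟩
      by_contra hcon
      exact absurd hlt (not_lt.2 (ENNReal.ofReal_le_ofReal (not_le.1 hcon).le))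
    have hmono : Monotone (fun N : ℕ => ⋂ n : ℕ, ⋂ (_ : N ≤ n),
        {ω | 0 < Z (n : ℝ≥0) ω ∧ Z (n : ℝ≥0) ω ≤ ε}) := by
      intro N N' h ω hω
      exact Set.mem_iInter.2 fun n => Set.mem_iInter.2 fun hn =>
        Set.mem_iInter.1 (Set.mem_iInter.1 hω n) (h.trans hn)
    calc P (B \ A) ≤ P (⋃ N : ℕ, ⋂ n : ℕ, ⋂ (_ : N ≤ n),
          {ω | 0 < Z (n : ℝ≥0) ω ∧ Z (n : ℝ≥0) ω ≤ ε}) := measure_mono hcov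
      _ = ⨆ N : ℕ, P (⋂ n : ℕ, ⋂ (_ : N ≤ n),
          {ω | 0 < Z (n : ℝ≥0) ω ∧ Z (n : ℝ≥0) ω ≤ ε}) :=
          Directed.measure_iUnion hmono.directed_le
      _ ≤ ENNReal.ofReal η := by
          refine iSup_le fun N => le_trans (measure_mono ?_) (hstar (N : ℝ≥0))
          exact fun ω hω => Set.mem_iInter.1 (Set.mem_iInter.1 hω N) le_rfl
      _ = (η : ℝ≥0∞) := ENNReal.ofReal_coe_nnreal
  -- ========== conclusion ==========
  have h1 : P A = P (A ∩ B) := by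
    refine le_antisymm ?_ (measure_mono Set.inter_subset_left)
    calc P A = P ((A ∩ B) ∪ (A \ B)) := by rw [Set.inter_union_diff]
      _ ≤ P (A ∩ B) + P (A \ B) := measure_union_le _ _
      _ = P (A ∩ B) := by rw [hE1, add_zero]
  have h2 : P B = P (A ∩ B) := by
    refine le_antisymm ?_ (measure_mono Set.inter_subset_right)
    calc P B = P ((B ∩ A) ∪ (B \ A)) := by rw [Set.inter_union_diff]
      _ ≤ P (B ∩ A) + P (B \ A) := measure_union_le _ _
      _ = P (A ∩ B) := by rw [hE2, add_zero, Set.inter_comm]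
  rw [h1, h2]
end
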